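/- arXiv:2507.12283 — 4 statements merged into one kernel-verified Lean document; each statement's English description precedes it below -/
import Mathlib

section
/- For all positive real numbers a, b and all t ∈ (0,1), a·log t + b·log(1−t) ≤ a·log(a/(a+b)) + b·log(b/(a+b)). -/
/-- For all positive reals `a, b` and all `t ∈ (0,1)`,
`a * log t + b * log (1 - t) ≤ a * log (a/(a+b)) + b * log (b/(a+b))`. -/
theorem fade_stmt1 (a b : ℝ) (ha : 0 < a) (hb : 0 < b) (t : ℝ) (ht : t ∈ Set.Ioo (0 : ℝ) 1) :
    a * Real.log t + b * Real.log (1 - t) ≤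
      a * Real.log (a / (a + b)) + b * Real.log (b / (a + b)) := by
  obtain ⟨ht0, ht1⟩ := ht
  have hab : 0 < a + b := by linarith
  have h1t : 0 < 1 - t := by linarith
  have k1 : Real.log (t * ((a + b) / a)) ≤ t * ((a + b) / a) - 1 :=
    Real.log_le_sub_one_of_pos (by positivity)
  have k2 : Real.log ((1 - t) * ((a + b) / b)) ≤ (1 - t) * ((a + b) / b) - 1 :=
    Real.log_le_sub_one_of_pos (by positivity)
  have e1 : Real.log (t * ((a + b) / a)) = Real.log t - Real.log (a / (a + b)) := by
    rw [Real.log_mul (ne_of_gt ht0) (by positivity),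
      Real.log_div (ne_of_gt hab) (ne_of_gt ha),
      Real.log_div (ne_of_gt ha) (ne_of_gt hab)]
    ring
  have e2 : Real.log ((1 - t) * ((a + b) / b)) = Real.log (1 - t) - Real.log (b / (a + b)) := by
    rw [Real.log_mul (ne_of_gt h1t) (by positivity),
      Real.log_div (ne_of_gt hab) (ne_of_gt hb),
      Real.log_div (ne_of_gt hb) (ne_of_gt hab)]
    ring
  rw [e1] at k1
  rw [e2] at k2
  have m1 : a * (Real.log t - Real.log (a / (a + b))) ≤ t * (a + b) - a := by
    have := mul_le_mul_of_nonneg_left k1 ha.le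
    calc a * (Real.log t - Real.log (a / (a + b))) ≤ a * (t * ((a + b) / a) - 1) := this
      _ = t * (a + b) - a := by field_simp
  have m2 : b * (Real.log (1 - t) - Real.log (b / (a + b))) ≤ (1 - t) * (a + b) - b := by
    have := mul_le_mul_of_nonneg_left k2 hb.le
    calc b * (Real.log (1 - t) - Real.log (b / (a + b))) ≤ b * ((1 - t) * ((a + b) / b) - 1) := this
      _ = (1 - t) * (a + b) - b := by field_simp
  nlinarith [m1, m2]
end

section
/- Let (X, 𝒜) be a measurable space, λ a σ-finite measure on X, and let p, q : X → ℝ≥0 be measurable densities with ∫ p dλ = ∫ q dλ = 1. Let π ∈ (0,1) and define D*(x) = π·p(x) / (π·p(x) + (1−π)·q(x)) on the set where π·p(x) + (1−π)·q(x) > 0 (and D*(x) = π elsewhere). Then for every measurable function D : X → (0,1), we have π·∫ p(x)·log D(x) dλ(x) + (1−π)·∫ q(x)·log(1−D(x)) dλ(x) ≤ π·∫ p(x)·log D*(x) dλ(x) + (1−π)·∫ q(x)·log(1−D*(x)) dλ(x), where the integrals are interpreted in the extended reals. -/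
open MeasureTheory
open scoped ENNReal NNReal

/-- The extended-real-valued integral of a real function: the Lebesgue integral of the
positive part minus that of the negative part, valued in `EReal`. -/
noncomputable def erealIntegral {X : Type*} [MeasurableSpace X] (lam : Measure X)
    (f : X → ℝ) : EReal :=
  ((∫⁻ x, ENNReal.ofReal (f x) ∂lam : ℝ≥0∞) : EReal)
    - ((∫⁻ x, ENNReal.ofReal (-(f x)) ∂lam : ℝ≥0∞) : EReal)

lemma ptwise (a b D t π : ℝ) (ha : 0 ≤ a) (hb : 0 ≤ b)
    (hD : D ∈ Set.Ioo (0:ℝ) 1)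
    (ht : t = if 0 < a + b then a / (a + b) else π) :
    a * Real.log D + b * Real.log (1 - D) ≤ a * Real.log t + b * Real.log (1 - t) := by
  have hlogD : Real.log D ≤ 0 := Real.log_nonpos hD.1.le hD.2.le
  have hlog1D : Real.log (1 - D) ≤ 0 := Real.log_nonpos (by linarith [hD.2]) (by linarith [hD.1])
  by_cases hs : 0 < a + b
  · rw [if_pos hs] at ht
    rcases eq_or_lt_of_le ha with h0 | hapos
    · have hts : t = 0 := by rw [ht, ← h0, zero_div]
      rw [hts, ← h0]
      simp only [zero_mul, zero_add, sub_zero, Real.log_one, mul_zero]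
      exact mul_nonpos_of_nonneg_of_nonpos hb hlog1D
    rcases eq_or_lt_of_le hb with h0 | hbpos
    · have hts : t = 1 := by rw [ht, ← h0, add_zero, div_self (by linarith)]
      rw [hts, ← h0]
      simp only [Real.log_one, mul_zero, zero_mul, add_zero, sub_self]
      exact mul_nonpos_of_nonneg_of_nonpos ha hlogD
    · have ht0 : 0 < t := by rw [ht]; positivity
      have ht1 : t < 1 := by rw [ht, div_lt_one hs]; linarith
      have h1t : 0 < 1 - t := by linarith
      have key1 : Real.log D - Real.log t ≤ D / t - 1 := by
        rw [← Real.log_div hD.1.ne' ht0.ne']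
        exact Real.log_le_sub_one_of_pos (div_pos hD.1 ht0)
      have key2 : Real.log (1 - D) - Real.log (1 - t) ≤ (1 - D) / (1 - t) - 1 := by
        rw [← Real.log_div (by linarith [hD.2] : (1:ℝ) - D ≠ 0) h1t.ne']
        exact Real.log_le_sub_one_of_pos (div_pos (by linarith [hD.2]) h1t)
      have hzero : a * (D / t - 1) + b * ((1 - D) / (1 - t) - 1) = 0 := by
        rw [ht]
        have h1 : 1 - a / (a + b) = b / (a + b) := by field_simp; ring
        rw [h1]
        field_simp
        ring
      nlinarith [mul_le_mul_of_nonneg_left key1 hapos.le,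
        mul_le_mul_of_nonneg_left key2 hbpos.le]
  · have ha0 : a = 0 := le_antisymm (by linarith) ha
    have hb0 : b = 0 := le_antisymm (by linarith) hb
    simp [ha0, hb0]

lemma erealIntegral_of_nonpos {X : Type*} [MeasurableSpace X] (lam : Measure X)
    {f : X → ℝ} (h : ∀ x, f x ≤ 0) :
    erealIntegral lam f = -((∫⁻ x, ENNReal.ofReal (-(f x)) ∂lam : ℝ≥0∞) : EReal) := by
  unfold erealIntegral
  have h0 : (∫⁻ x, ENNReal.ofReal (f x) ∂lam) = 0 := by
    rw [lintegral_congr (fun x => ENNReal.ofReal_eq_zero.2 (h x))]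
    simp
  rw [h0, EReal.coe_ennreal_zero]
  exact zero_sub _

lemma ereal_scal (c : ℝ) (hc : 0 ≤ c) (L : ℝ≥0∞) :
    (c : EReal) * -(L : EReal) = -(((ENNReal.ofReal c * L : ℝ≥0∞)) : EReal) := by
  rw [EReal.coe_ennreal_mul, EReal.coe_ennreal_ofReal, max_eq_left hc, mul_neg]

lemma ereal_negadd (A B : ℝ≥0∞) : -(A : EReal) + -(B : EReal) = -((A + B : ℝ≥0∞) : EReal) := by
  rw [EReal.coe_ennreal_add, EReal.neg_add (Or.inl (by simp)) (Or.inr (by simp)),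
    sub_eq_add_neg]

/-- Optimality of the Bayes (likelihood-ratio) discriminator
`D*(x) = π p(x) / (π p(x) + (1-π) q(x))` (set to `π` where the denominator vanishes):
for every measurable `D : X → (0,1)`, the weighted cross-entropy objective
`π ∫ p log D dλ + (1-π) ∫ q log(1-D) dλ` (in the extended reals) is at most
its value at `D*`. -/
theorem fade_stmt2 {X : Type*} [MeasurableSpace X] (lam : Measure X) [SigmaFinite lam]
    (p q : X → ℝ≥0) (hp : Measurable p) (hq : Measurable q)
    (hp1 : ∫⁻ x, (p x : ℝ≥0∞) ∂lam = 1) (hq1 : ∫⁻ x, (q x : ℝ≥0∞) ∂lam = 1)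
    (π : ℝ) (hπ : π ∈ Set.Ioo (0 : ℝ) 1)
    (Dstar : X → ℝ)
    (hDstar : ∀ x, Dstar x =
      if 0 < π * (p x : ℝ) + (1 - π) * (q x : ℝ) then
        π * (p x : ℝ) / (π * (p x : ℝ) + (1 - π) * (q x : ℝ))
      else π)
    (D : X → ℝ) (hD : Measurable D) (hD01 : ∀ x, D x ∈ Set.Ioo (0 : ℝ) 1) :
    (π : EReal) * erealIntegral lam (fun x => (p x : ℝ) * Real.log (D x))
      + ((1 - π : ℝ) : EReal) * erealIntegral lam (fun x => (q x : ℝ) * Real.log (1 - D x))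
    ≤ (π : EReal) * erealIntegral lam (fun x => (p x : ℝ) * Real.log (Dstar x))
      + ((1 - π : ℝ) : EReal)
          * erealIntegral lam (fun x => (q x : ℝ) * Real.log (1 - Dstar x)) := by
  obtain ⟨hπ0, hπ1⟩ := hπ
  have h1π : (0:ℝ) < 1 - π := by linarith
  have hDs01 : ∀ x, Dstar x ∈ Set.Icc (0:ℝ) 1 := by
    intro x
    rw [hDstar x]
    split_ifs with h
    · constructor
      · exact div_nonneg (by positivity) h.le
      · rw [div_le_one h]
        nlinarith [(q x).coe_nonneg]
    · exact ⟨hπ0.le, hπ1.le⟩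
  -- nonpositivity of integrands
  have hfP : ∀ x, (p x : ℝ) * Real.log (D x) ≤ 0 := fun x =>
    mul_nonpos_of_nonneg_of_nonpos (p x).coe_nonneg
      (Real.log_nonpos (hD01 x).1.le (hD01 x).2.le)
  have hfQ : ∀ x, (q x : ℝ) * Real.log (1 - D x) ≤ 0 := fun x =>
    mul_nonpos_of_nonneg_of_nonpos (q x).coe_nonneg
      (Real.log_nonpos (by linarith [(hD01 x).2]) (by linarith [(hD01 x).1]))
  have hfP' : ∀ x, (p x : ℝ) * Real.log (Dstar x) ≤ 0 := fun x =>
    mul_nonpos_of_nonneg_of_nonpos (p x).coe_nonneg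
      (Real.log_nonpos (hDs01 x).1 (hDs01 x).2)
  have hfQ' : ∀ x, (q x : ℝ) * Real.log (1 - Dstar x) ≤ 0 := fun x =>
    mul_nonpos_of_nonneg_of_nonpos (q x).coe_nonneg
      (Real.log_nonpos (by linarith [(hDs01 x).2]) (by linarith [(hDs01 x).1]))
  -- measurability of Dstar
  have hDsm : Measurable Dstar := by
    have heq : Dstar = fun x =>
        if 0 < π * (p x : ℝ) + (1 - π) * (q x : ℝ) then
          π * (p x : ℝ) / (π * (p x : ℝ) + (1 - π) * (q x : ℝ))
        else π := funext hDstar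
    rw [heq]
    have hden : Measurable (fun x => π * (p x : ℝ) + (1 - π) * (q x : ℝ)) :=
      (measurable_const.mul hp.coe_nnreal_real).add
        (measurable_const.mul hq.coe_nnreal_real)
    exact Measurable.ite (measurableSet_lt measurable_const hden)
      ((measurable_const.mul hp.coe_nnreal_real).div hden) measurable_const
  rw [erealIntegral_of_nonpos lam hfP, erealIntegral_of_nonpos lam hfQ,
    erealIntegral_of_nonpos lam hfP', erealIntegral_of_nonpos lam hfQ',
    ereal_scal π hπ0.le, ereal_scal π hπ0.le, ereal_scal (1-π) h1π.le,
    ereal_scal (1-π) h1π.le, ereal_negadd, ereal_negadd,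
    EReal.neg_le_neg_iff, EReal.coe_ennreal_le_coe_ennreal_iff]
  -- now an ℝ≥0∞ inequality
  have hmeas1 : Measurable fun x =>
      ENNReal.ofReal π * ENNReal.ofReal (-((p x : ℝ) * Real.log (Dstar x))) :=
    measurable_const.mul
      ((hp.coe_nnreal_real.mul hDsm.log).neg.ennreal_ofReal)
  have hmeas2 : Measurable fun x =>
      ENNReal.ofReal π * ENNReal.ofReal (-((p x : ℝ) * Real.log (D x))) :=
    measurable_const.mul
      ((hp.coe_nnreal_real.mul hD.log).neg.ennreal_ofReal)
  calc ENNReal.ofReal π * ∫⁻ x, ENNReal.ofReal (-((p x : ℝ) * Real.log (Dstar x))) ∂lam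
        + ENNReal.ofReal (1-π) * ∫⁻ x, ENNReal.ofReal (-((q x : ℝ) * Real.log (1 - Dstar x))) ∂lam
      = ∫⁻ x, (ENNReal.ofReal π * ENNReal.ofReal (-((p x : ℝ) * Real.log (Dstar x)))
          + ENNReal.ofReal (1-π) * ENNReal.ofReal (-((q x : ℝ) * Real.log (1 - Dstar x)))) ∂lam := by
        rw [lintegral_add_left hmeas1, lintegral_const_mul' _ _ ENNReal.ofReal_ne_top,
          lintegral_const_mul' _ _ ENNReal.ofReal_ne_top]
    _ ≤ ∫⁻ x, (ENNReal.ofReal π * ENNReal.ofReal (-((p x : ℝ) * Real.log (D x)))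
          + ENNReal.ofReal (1-π) * ENNReal.ofReal (-((q x : ℝ) * Real.log (1 - D x)))) ∂lam := by
        refine lintegral_mono fun x => ?_
        rw [← ENNReal.ofReal_mul hπ0.le, ← ENNReal.ofReal_mul hπ0.le,
          ← ENNReal.ofReal_mul h1π.le, ← ENNReal.ofReal_mul h1π.le,
          ← ENNReal.ofReal_add (by nlinarith [hfP' x] : (0:ℝ) ≤ π * -((p x : ℝ) * Real.log (Dstar x)))
            (by nlinarith [hfQ' x] : (0:ℝ) ≤ (1-π) * -((q x : ℝ) * Real.log (1 - Dstar x))),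
          ← ENNReal.ofReal_add (by nlinarith [hfP x] : (0:ℝ) ≤ π * -((p x : ℝ) * Real.log (D x)))
            (by nlinarith [hfQ x] : (0:ℝ) ≤ (1-π) * -((q x : ℝ) * Real.log (1 - D x)))]
        apply ENNReal.ofReal_le_ofReal
        have hkey := ptwise (π * (p x : ℝ)) ((1-π) * (q x : ℝ)) (D x) (Dstar x) π
          (by positivity) (by positivity) (hD01 x) (hDstar x)
        nlinarith [hkey]
    _ = ENNReal.ofReal π * ∫⁻ x, ENNReal.ofReal (-((p x : ℝ) * Real.log (D x))) ∂lam
        + ENNReal.ofReal (1-π) * ∫⁻ x, ENNReal.ofReal (-((q x : ℝ) * Real.log (1 - D x))) ∂lam := by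
        rw [lintegral_add_left hmeas2, lintegral_const_mul' _ _ ENNReal.ofReal_ne_top,
          lintegral_const_mul' _ _ ENNReal.ofReal_ne_top]
end

section
/- Let μ and ν be probability measures on a measurable space (X, 𝒜) with μ ≠ ν. Then there exists a measurable function D : X → (0,1) such that ∫ log(D(x)) dμ(x) + ∫ log(1 − D(x)) dν(x) > −2·log 2, with both integrals finite. -/
open MeasureTheory
open scoped Classical

private lemma fade_ite_int {X : Type*} [MeasurableSpace X] (μ : Measure X)
    [IsProbabilityMeasure μ] {A : Set X} (hA : MeasurableSet A) (c1 c0 : ℝ) :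
    Integrable (fun x => if x ∈ A then c1 else c0) μ ∧
      ∫ x, (if x ∈ A then c1 else c0) ∂μ = (μ A).toReal * (c1 - c0) + c0 := by
  have heq : (fun x => if x ∈ A then c1 else c0)
      = fun x => A.indicator (fun _ => c1 - c0) x + c0 := by
    funext x
    by_cases hx : x ∈ A <;> simp [hx]
  have hint : Integrable (fun x => A.indicator (fun _ => c1 - c0) x + c0) μ :=
    ((integrable_const (c1 - c0)).indicator hA).add (integrable_const c0)
  constructor
  · rw [heq]; exact hint
  · rw [heq, integral_add ((integrable_const (c1 - c0)).indicator hA) (integrable_const c0),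
      integral_indicator_const _ hA, integral_const]
    simp [smul_eq_mul, mul_comm, Measure.real]

private lemma fade_log_lb1 {t : ℝ} (ht0 : 0 ≤ t) : t - t ^ 2 ≤ Real.log (1 + t) := by
  have h1 : (0:ℝ) < 1 + t := by linarith
  have h2 := Real.log_le_sub_one_of_pos (show (0:ℝ) < (1 + t)⁻¹ by positivity)
  rw [Real.log_inv] at h2
  have h3 : (1 + t) * (1 + t)⁻¹ = 1 := mul_inv_cancel₀ (ne_of_gt h1)
  nlinarith [sq_nonneg t, mul_pos h1 (inv_pos.mpr h1)]

private lemma fade_log_lb2 {t : ℝ} (ht0 : 0 ≤ t) (ht1 : t ≤ 1/2) :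
    -t - 2 * t ^ 2 ≤ Real.log (1 - t) := by
  have h1 : (0:ℝ) < 1 - t := by linarith
  have h2 := Real.log_le_sub_one_of_pos (show (0:ℝ) < (1 - t)⁻¹ by positivity)
  rw [Real.log_inv] at h2
  have h3 : (1 - t) * (1 - t)⁻¹ = 1 := mul_inv_cancel₀ (ne_of_gt h1)
  nlinarith [sq_nonneg t, mul_pos h1 (inv_pos.mpr h1)]

private lemma fade_key {a b t : ℝ} (hb : 0 ≤ b) (hab : b < a) (ha : a ≤ 1)
    (ht : t = (a - b) / 4) : 0 < a * Real.log (1 + t) + b * Real.log (1 - t) := by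
  have ht0 : 0 < t := by rw [ht]; linarith
  have ht1 : t ≤ 1/4 := by rw [ht]; linarith
  have h1 := fade_log_lb1 (le_of_lt ht0)
  have h2 := fade_log_lb2 (le_of_lt ht0) (by linarith)
  nlinarith [mul_le_mul_of_nonneg_left h1 (by linarith : (0:ℝ) ≤ a),
    mul_le_mul_of_nonneg_left h2 hb, sq_nonneg t, mul_pos ht0 ht0]

/-- If `μ ≠ ν`, some measurable discriminator `D : X → (0,1)` achieves an adversarial
objective `∫ log D dμ + ∫ log (1 - D) dν` strictly greater than `-2 log 2` (the value
of the constant discriminator `1/2`), with both integrals finite. -/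
theorem fade_stmt10 {X : Type*} [MeasurableSpace X] (μ ν : Measure X)
    [IsProbabilityMeasure μ] [IsProbabilityMeasure ν] (hne : μ ≠ ν) :
    ∃ D : X → ℝ, Measurable D ∧ (∀ x, D x ∈ Set.Ioo (0 : ℝ) 1) ∧
      Integrable (fun x => Real.log (D x)) μ ∧
      Integrable (fun x => Real.log (1 - D x)) ν ∧
      (∫ x, Real.log (D x) ∂μ) + (∫ x, Real.log (1 - D x) ∂ν) > -2 * Real.log 2 := by
  -- Find a measurable set where μ and ν differ
  obtain ⟨s, hs, hsne⟩ : ∃ s, MeasurableSet s ∧ μ s ≠ ν s := by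
    by_contra h
    push_neg at h
    exact hne (Measure.ext h)
  -- Get a set A with (ν A).toReal < (μ A).toReal
  have key : ∃ A : Set X, MeasurableSet A ∧ (ν A).toReal < (μ A).toReal := by
    have hrne : (μ s).toReal ≠ (ν s).toReal := fun h =>
      hsne ((ENNReal.toReal_eq_toReal_iff' (measure_ne_top μ s) (measure_ne_top ν s)).mp h)
    rcases lt_or_gt_of_ne hrne with h | h
    · refine ⟨sᶜ, hs.compl, ?_⟩
      have h1 : μ sᶜ = 1 - μ s := prob_compl_eq_one_sub hs
      have h2 : ν sᶜ = 1 - ν s := prob_compl_eq_one_sub hs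
      rw [h1, h2, ENNReal.toReal_sub_of_le prob_le_one ENNReal.one_ne_top,
        ENNReal.toReal_sub_of_le prob_le_one ENNReal.one_ne_top]
      simp only [ENNReal.toReal_one]
      linarith
    · exact ⟨s, hs, h⟩
  obtain ⟨A, hA, hab⟩ := key
  set a : ℝ := (μ A).toReal with ha_def
  set b : ℝ := (ν A).toReal with hb_def
  have hb0 : 0 ≤ b := ENNReal.toReal_nonneg
  have ha1 : a ≤ 1 := by
    have := ENNReal.toReal_mono ENNReal.one_ne_top (prob_le_one (μ := μ) (s := A))
    simpa using this
  set t : ℝ := (a - b) / 4 with ht_def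
  have ht0 : 0 < t := by rw [ht_def]; linarith
  have ht1 : t ≤ 1/4 := by rw [ht_def]; linarith
  refine ⟨fun x => if x ∈ A then (1 + t) / 2 else 1 / 2,
    Measurable.ite hA measurable_const measurable_const, ?_, ?_, ?_, ?_⟩
  · intro x
    by_cases hx : x ∈ A
    · simp only [hx, if_true, Set.mem_Ioo]
      constructor <;> linarith
    · simp only [hx, if_false, Set.mem_Ioo]
      norm_num
  · have heq : (fun x => Real.log (if x ∈ A then (1 + t) / 2 else 1 / 2))
        = fun x => if x ∈ A then Real.log ((1 + t) / 2) else Real.log (1 / 2) := by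
      funext x; by_cases hx : x ∈ A <;> simp [hx]
    rw [heq]
    exact (fade_ite_int μ hA _ _).1
  · have heq : (fun x => Real.log (1 - if x ∈ A then (1 + t) / 2 else 1 / 2))
        = fun x => if x ∈ A then Real.log ((1 - t) / 2) else Real.log (1 / 2) := by
      funext x
      by_cases hx : x ∈ A
      · simp only [hx, if_true]; congr 1; ring
      · simp only [hx, if_false]; norm_num
    rw [heq]
    exact (fade_ite_int ν hA _ _).1
  · have heq1 : (fun x => Real.log (if x ∈ A then (1 + t) / 2 else 1 / 2))
        = fun x => if x ∈ A then Real.log ((1 + t) / 2) else Real.log (1 / 2) := by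
      funext x; by_cases hx : x ∈ A <;> simp [hx]
    have heq2 : (fun x => Real.log (1 - if x ∈ A then (1 + t) / 2 else 1 / 2))
        = fun x => if x ∈ A then Real.log ((1 - t) / 2) else Real.log (1 / 2) := by
      funext x
      by_cases hx : x ∈ A
      · simp only [hx, if_true]; congr 1; ring
      · simp only [hx, if_false]; norm_num
    simp only [heq1, heq2]
    rw [(fade_ite_int μ hA _ _).2, (fade_ite_int ν hA _ _).2]
    have hl1 : Real.log ((1 + t) / 2) = Real.log (1 + t) - Real.log 2 :=
      Real.log_div (by linarith) two_ne_zero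
    have hl2 : Real.log ((1 - t) / 2) = Real.log (1 - t) - Real.log 2 :=
      Real.log_div (by linarith) two_ne_zero
    have hl3 : Real.log (1 / 2) = -Real.log 2 := by
      rw [one_div, Real.log_inv]
    rw [hl1, hl2, hl3, ← ha_def, ← hb_def]
    have hkey := fade_key hb0 hab ha1 ht_def
    nlinarith [hkey]
end

section
/- Let μ and ν be probability measures on a measurable space (X, 𝒜), let m = (1/2)•μ + (1/2)•ν, and assume KL(μ ‖ m) and KL(ν ‖ m) are finite. Then the supremum, over all measurable functions D : X → (0,1) such that log∘D is μ-integrable and log∘(1−D) is ν-integrable, of ∫ log(D(x)) dμ(x) + ∫ log(1 − D(x)) dν(x), equals KL(μ ‖ m) + KL(ν ‖ m) − 2·log 2, where KL denotes the Kullback–Leibler divergence (here real-valued by the finiteness assumption) and log the natural logarithm. -/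
open MeasureTheory
open scoped ENNReal Classical

/-- The Kullback–Leibler divergence, valued in `[0, ∞]`: it is
`∫ log (dμ/dν) dμ` when `μ ≪ ν` and the log-likelihood ratio is integrable,
and `∞` otherwise. -/
noncomputable def klDiv {X : Type*} [MeasurableSpace X] (μ ν : Measure X) : ℝ≥0∞ :=
  if μ ≪ ν ∧ Integrable (llr μ ν) μ then ENNReal.ofReal (∫ x, llr μ ν x ∂μ) else ⊤


lemma fade_div_aux {X : Type*} [MeasurableSpace X] (μ m : Measure X)
    [IsProbabilityMeasure μ] [IsProbabilityMeasure m] (hac : μ ≪ m)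
    (D : X → ℝ) (hD : Measurable D) (h0 : ∀ x, 0 ≤ D x) (h2 : ∀ x, D x ≤ 2) :
    Integrable (fun x => D x / (μ.rnDeriv m x).toReal) μ ∧
      ∫ x, D x / (μ.rnDeriv m x).toReal ∂μ ≤ ∫ x, D x ∂m := by
  set F : X → ℝ := fun x => (μ.rnDeriv m x).toReal with hF
  have hFmeas : Measurable F := (Measure.measurable_rnDeriv μ m).ennreal_toReal
  have hsmeas : Measurable (fun x => F x * (D x / F x)) := hFmeas.mul (hD.div hFmeas)
  have hs_eq : ∀ x, F x * (D x / F x) = if F x = 0 then 0 else D x := by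
    intro x
    by_cases h : F x = 0
    · simp [h]
    · rw [if_neg h, mul_comm, div_mul_cancel₀ _ h]
  have hs_int : Integrable (fun x => F x * (D x / F x)) m := by
    refine (integrable_const (2:ℝ)).mono' hsmeas.aestronglyMeasurable (Filter.Eventually.of_forall fun x => ?_)
    rw [hs_eq]
    split
    · simp
    · rw [Real.norm_eq_abs, abs_of_nonneg (h0 x)]; exact h2 x
  have hint : Integrable (fun x => D x / F x) μ := by
    rw [← integrable_rnDeriv_smul_iff hac]
    simpa [smul_eq_mul] using hs_int
  refine ⟨hint, ?_⟩
  have heq : ∫ x, D x / F x ∂μ = ∫ x, F x * (D x / F x) ∂m := by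
    rw [← integral_rnDeriv_smul hac]
    simp [smul_eq_mul]
    rfl
  rw [heq]
  have hDint : Integrable D m :=
    (integrable_const (2:ℝ)).mono' hD.aestronglyMeasurable
      (Filter.Eventually.of_forall fun x => by rw [Real.norm_eq_abs, abs_of_nonneg (h0 x)]; exact h2 x)
  refine integral_mono hs_int hDint fun x => ?_
  rw [hs_eq]
  split
  exacts [h0 x, le_rfl]

lemma fade_upper {X : Type*} [MeasurableSpace X] (μ m : Measure X)
    [IsProbabilityMeasure μ] [IsProbabilityMeasure m] (hac : μ ≪ m)
    (hllr : Integrable (llr μ m) μ)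
    (D : X → ℝ) (hD : Measurable D) (hD01 : ∀ x, D x ∈ Set.Ioo (0:ℝ) 1)
    (hDlog : Integrable (fun x => Real.log (D x)) μ) :
    ∫ x, Real.log (D x) ∂μ ≤ ∫ x, llr μ m x ∂μ + ∫ x, 2 * D x ∂m - 1 - Real.log 2 := by
  obtain ⟨hq_int, hq_le⟩ := fade_div_aux μ m hac (fun x => 2 * D x) (hD.const_mul 2)
    (fun x => by have := (hD01 x).1; show (0:ℝ) ≤ 2 * D x; linarith)
    (fun x => by have := (hD01 x).2; show 2 * D x ≤ 2; linarith)
  have hae : ∀ᵐ x ∂μ, Real.log (D x) - llr μ m x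
      ≤ 2 * D x / (μ.rnDeriv m x).toReal - 1 - Real.log 2 := by
    filter_upwards [Measure.rnDeriv_pos hac, hac.ae_le (Measure.rnDeriv_lt_top μ m)]
      with x hx hxt
    have hFpos : 0 < (μ.rnDeriv m x).toReal := ENNReal.toReal_pos hx.ne' hxt.ne
    have hDpos := (hD01 x).1
    have key : Real.log (2 * D x / (μ.rnDeriv m x).toReal)
        ≤ 2 * D x / (μ.rnDeriv m x).toReal - 1 :=
      Real.log_le_sub_one_of_pos (by positivity)
    have hexp : Real.log (2 * D x / (μ.rnDeriv m x).toReal)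
        = Real.log 2 + Real.log (D x) - Real.log ((μ.rnDeriv m x).toReal) := by
      rw [Real.log_div (by positivity) hFpos.ne', Real.log_mul two_ne_zero hDpos.ne']
    have hllr_eq : llr μ m x = Real.log ((μ.rnDeriv m x).toReal) := rfl
    rw [hllr_eq]
    linarith
  have h1 : ∫ x, (Real.log (D x) - llr μ m x) ∂μ
      ≤ ∫ x, (2 * D x / (μ.rnDeriv m x).toReal - 1 - Real.log 2) ∂μ :=
    integral_mono_ae (hDlog.sub hllr)
      ((hq_int.sub (integrable_const 1)).sub (integrable_const (Real.log 2))) hae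
  have i1 : Integrable (fun x => 2 * D x / (μ.rnDeriv m x).toReal - 1) μ :=
    hq_int.sub (integrable_const 1)
  rw [integral_sub hDlog hllr,
    integral_sub i1 (integrable_const _),
    integral_sub hq_int (integrable_const _), integral_const, integral_const] at h1
  simp only [measure_univ, ENNReal.toReal_one, probReal_univ, smul_eq_mul, one_mul] at h1
  linarith

lemma fade_llr_nonneg {X : Type*} [MeasurableSpace X] (μ m : Measure X)
    [IsProbabilityMeasure μ] [IsProbabilityMeasure m] (hac : μ ≪ m)
    (hllr : Integrable (llr μ m) μ) : 0 ≤ ∫ x, llr μ m x ∂μ := by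
  obtain ⟨hq_int, hq_le⟩ := fade_div_aux μ m hac (fun _ => 1) measurable_const
    (fun _ => zero_le_one) (fun _ => one_le_two)
  have hae : ∀ᵐ x ∂μ, -llr μ m x ≤ 1 / (μ.rnDeriv m x).toReal - 1 := by
    filter_upwards [Measure.rnDeriv_pos hac, hac.ae_le (Measure.rnDeriv_lt_top μ m)]
      with x hx hxt
    have hFpos : 0 < (μ.rnDeriv m x).toReal := ENNReal.toReal_pos hx.ne' hxt.ne
    have key : Real.log (1 / (μ.rnDeriv m x).toReal)
        ≤ 1 / (μ.rnDeriv m x).toReal - 1 :=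
      Real.log_le_sub_one_of_pos (by positivity)
    have : Real.log (1 / (μ.rnDeriv m x).toReal)
        = -Real.log ((μ.rnDeriv m x).toReal) := by
      rw [one_div, Real.log_inv]
    have hllr_eq : llr μ m x = Real.log ((μ.rnDeriv m x).toReal) := rfl
    rw [hllr_eq]
    linarith
  have h1 : ∫ x, (-llr μ m x) ∂μ ≤ ∫ x, (1 / (μ.rnDeriv m x).toReal - 1) ∂μ :=
    integral_mono_ae hllr.neg (hq_int.sub (integrable_const 1)) hae
  rw [integral_neg, integral_sub hq_int (integrable_const 1), integral_const] at h1
  have h2 : ∫ (_ : X), (1:ℝ) ∂m = 1 := by simp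
  rw [h2] at hq_le
  simp only [measure_univ, ENNReal.toReal_one, probReal_univ, smul_eq_mul, one_mul] at h1
  linarith

lemma fade_sum {X : Type*} [MeasurableSpace X] (μ ν m : Measure X)
    [IsProbabilityMeasure μ] [IsProbabilityMeasure ν] [SigmaFinite m]
    (hm : m = (1 / 2 : ℝ≥0∞) • μ + (1 / 2 : ℝ≥0∞) • ν) :
    ∀ᵐ x ∂m, (μ.rnDeriv m x).toReal + (ν.rnDeriv m x).toReal = 2
      ∧ (μ.rnDeriv m x).toReal ≤ 2 ∧ (ν.rnDeriv m x).toReal ≤ 2 := by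
  have h2m : μ + ν = (2 : ℝ≥0∞) • m := by
    rw [hm, smul_add, smul_smul, smul_smul]
    rw [show (2 : ℝ≥0∞) * (1 / 2) = 1 by
      rw [one_div, ENNReal.mul_inv_cancel two_ne_zero ENNReal.ofNat_ne_top]]
    simp
  have hsum : ∀ᵐ x ∂m, μ.rnDeriv m x + ν.rnDeriv m x = 2 := by
    have ha := (Measure.rnDeriv_add μ ν m).symm
    have hb : ((2 : ℝ≥0∞) • m).rnDeriv m =ᵐ[m] fun _ => (2 : ℝ≥0∞) := by
      filter_upwards [Measure.rnDeriv_smul_left_of_ne_top' m m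
        (r := 2) ENNReal.ofNat_ne_top, Measure.rnDeriv_self m] with x h1 h2
      rw [h1]
      simp [h2]
    rw [h2m] at ha
    filter_upwards [ha, hb] with x h1 h2
    rw [← Pi.add_apply, h1, h2]
  filter_upwards [hsum] with x hx
  have ha_le : μ.rnDeriv m x ≤ 2 := hx ▸ le_self_add
  have hb_le : ν.rnDeriv m x ≤ 2 := hx ▸ le_add_self
  have h2t : (2 : ℝ≥0∞) < ⊤ := by norm_num
  have ha : μ.rnDeriv m x ≠ ⊤ := (ha_le.trans_lt h2t).ne
  have hb : ν.rnDeriv m x ≠ ⊤ := (hb_le.trans_lt h2t).ne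
  have haux := congrArg ENNReal.toReal hx
  rw [ENNReal.toReal_add ha hb] at haux
  have h2 : ((2 : ℝ≥0∞)).toReal = 2 := by simp
  rw [h2] at haux
  refine ⟨haux, ?_, ?_⟩
  · have := ENNReal.toReal_nonneg (a := ν.rnDeriv m x); linarith [ENNReal.toReal_nonneg (a := ν.rnDeriv m x)]
  · linarith [ENNReal.toReal_nonneg (a := μ.rnDeriv m x)]

/-- With `m = (1/2) μ + (1/2) ν` and `KL(μ ‖ m)`, `KL(ν ‖ m)` finite, the supremum over
measurable discriminators `D : X → (0,1)` (with integrable log-scores) of the adversarial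
objective `∫ log D dμ + ∫ log (1 - D) dν` equals `KL(μ ‖ m) + KL(ν ‖ m) - 2 log 2`. -/
theorem fade_stmt13 {X : Type*} [MeasurableSpace X] (μ ν : Measure X)
    [IsProbabilityMeasure μ] [IsProbabilityMeasure ν]
    (m : Measure X) (hm : m = (1 / 2 : ℝ≥0∞) • μ + (1 / 2 : ℝ≥0∞) • ν)
    (hμm : klDiv μ m ≠ ⊤) (hνm : klDiv ν m ≠ ⊤) :
    sSup {r : ℝ | ∃ D : X → ℝ, Measurable D ∧ (∀ x, D x ∈ Set.Ioo (0 : ℝ) 1) ∧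
        Integrable (fun x => Real.log (D x)) μ ∧
        Integrable (fun x => Real.log (1 - D x)) ν ∧
        r = (∫ x, Real.log (D x) ∂μ) + (∫ x, Real.log (1 - D x) ∂ν)}
      = (klDiv μ m).toReal + (klDiv ν m).toReal - 2 * Real.log 2 := by
  haveI hPm : IsProbabilityMeasure m := by
    constructor
    rw [hm]
    simp only [Measure.coe_add, Pi.add_apply, Measure.smul_apply, smul_eq_mul,
      measure_univ, mul_one]
    rw [← two_mul, show (1 : ℝ≥0∞) / 2 = 2⁻¹ from one_div 2,
      ENNReal.mul_inv_cancel two_ne_zero ENNReal.ofNat_ne_top]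
  have hμc : μ ≪ m ∧ Integrable (llr μ m) μ := by
    by_contra h; rw [klDiv, if_neg h] at hμm; exact hμm rfl
  have hνc : ν ≪ m ∧ Integrable (llr ν m) ν := by
    by_contra h; rw [klDiv, if_neg h] at hνm; exact hνm rfl
  obtain ⟨hacμ, hintμ⟩ := hμc
  obtain ⟨hacν, hintν⟩ := hνc
  set Iμ : ℝ := ∫ x, llr μ m x ∂μ with hIμ
  set Iν : ℝ := ∫ x, llr ν m x ∂ν with hIν
  have hklμ : (klDiv μ m).toReal = Iμ := by
    rw [klDiv, if_pos ⟨hacμ, hintμ⟩, ENNReal.toReal_ofReal (fade_llr_nonneg μ m hacμ hintμ)]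
  have hklν : (klDiv ν m).toReal = Iν := by
    rw [klDiv, if_pos ⟨hacν, hintν⟩, ENNReal.toReal_ofReal (fade_llr_nonneg ν m hacν hintν)]
  rw [hklμ, hklν]
  set S : Set ℝ := {r : ℝ | ∃ D : X → ℝ, Measurable D ∧ (∀ x, D x ∈ Set.Ioo (0 : ℝ) 1) ∧
        Integrable (fun x => Real.log (D x)) μ ∧
        Integrable (fun x => Real.log (1 - D x)) ν ∧
        r = (∫ x, Real.log (D x) ∂μ) + (∫ x, Real.log (1 - D x) ∂ν)} with hS
  -- Upper bound
  have hub : ∀ r ∈ S, r ≤ Iμ + Iν - 2 * Real.log 2 := by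
    rintro r ⟨D, hD, h01, hLμ, hLν, rfl⟩
    have h01' : ∀ x, (1 - D x) ∈ Set.Ioo (0:ℝ) 1 := fun x => by
      obtain ⟨h1, h2⟩ := h01 x
      constructor <;> [linarith; linarith]
    have hA := fade_upper μ m hacμ hintμ D hD h01 hLμ
    have hB := fade_upper ν m hacν hintν (fun x => 1 - D x)
      (measurable_const.sub hD) h01' hLν
    have hint1 : Integrable (fun x => 2 * D x) m :=
      (integrable_const (2:ℝ)).mono' (hD.const_mul 2).aestronglyMeasurable
        (Filter.Eventually.of_forall fun x => by
          rw [Real.norm_eq_abs, abs_of_nonneg (by have := (h01 x).1; linarith)]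
          have := (h01 x).2; linarith)
    have hint2 : Integrable (fun x => 2 * (1 - D x)) m :=
      (integrable_const (2:ℝ)).mono' ((measurable_const.sub hD).const_mul 2).aestronglyMeasurable
        (Filter.Eventually.of_forall fun x => by
          rw [Real.norm_eq_abs, abs_of_nonneg (by have := (h01 x).2; linarith)]
          have := (h01 x).1; linarith)
    have hsum2 : ∫ x, 2 * D x ∂m + ∫ x, 2 * (1 - D x) ∂m = 2 := by
      rw [← integral_add hint1 hint2]
      have : (fun x => 2 * D x + 2 * (1 - D x)) = fun _ => (2:ℝ) := by
        funext x; ring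
      rw [this, integral_const]
      simp
    linarith
  -- Nonempty witness
  have hne : Real.log (1/2) + Real.log (1/2) ∈ S := by
    refine ⟨fun _ => 1/2, measurable_const, fun x => by norm_num, integrable_const _,
      integrable_const _, ?_⟩
    norm_num
  have hbdd : BddAbove S := ⟨Iμ + Iν - 2 * Real.log 2, fun r hr => hub r hr⟩
  refine le_antisymm (csSup_le ⟨_, hne⟩ hub) ?_
  -- Lower bound
  refine le_of_forall_sub_le fun ε hε => ?_
  set l : ℝ := 1 - Real.exp (-ε/2) with hl
  have hexp_lt : Real.exp (-ε/2) < 1 := by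
    rw [Real.exp_lt_one_iff]; linarith
  have hexp_pos : 0 < Real.exp (-ε/2) := Real.exp_pos _
  have hl0 : 0 < l := by simp [hl]; linarith
  have hl1 : l < 1 := by simp [hl]; linarith
  have hlog1l : Real.log (1 - l) = -ε/2 := by
    rw [hl]; simp [Real.log_exp]
  set F : X → ℝ := fun x => (μ.rnDeriv m x).toReal with hF
  set G : X → ℝ := fun x => (ν.rnDeriv m x).toReal with hG
  have hFmeas : Measurable F := (Measure.measurable_rnDeriv μ m).ennreal_toReal
  set D : X → ℝ := fun x => (1 - l) * min (F x / 2) 1 + l / 2 with hD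
  have hDmeas : Measurable D :=
    (((hFmeas.div_const 2).min measurable_const).const_mul (1 - l)).add_const (l / 2)
  have hD01 : ∀ x, D x ∈ Set.Ioo (0:ℝ) 1 := by
    intro x
    have h1 : 0 ≤ min (F x / 2) 1 := le_min (by positivity) zero_le_one
    have h2 : min (F x / 2) 1 ≤ 1 := min_le_right _ _
    have h3 : (1 - l) * min (F x / 2) 1 ≤ (1 - l) * 1 :=
      mul_le_mul_of_nonneg_left h2 (by linarith)
    have h4 : 0 ≤ (1 - l) * min (F x / 2) 1 := mul_nonneg (by linarith) h1
    constructor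
    · show 0 < (1 - l) * min (F x / 2) 1 + l / 2
      linarith
    · show (1 - l) * min (F x / 2) 1 + l / 2 < 1
      linarith
  have hsum := fade_sum μ ν m hm
  have hμae : ∀ᵐ x ∂μ, Real.log (1 - l) + llr μ m x - Real.log 2 ≤ Real.log (D x) := by
    filter_upwards [Measure.rnDeriv_pos hacμ, hacμ.ae_le (Measure.rnDeriv_lt_top μ m),
      hacμ.ae_le hsum] with x hx hxt hxs
    have hFpos : 0 < F x := ENNReal.toReal_pos hx.ne' hxt.ne
    have hF2 : F x ≤ 2 := hxs.2.1
    have hmin : min (F x / 2) 1 = F x / 2 := min_eq_left (by linarith)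
    have hDge : (1 - l) * (F x / 2) ≤ D x := by
      show (1 - l) * (F x / 2) ≤ (1 - l) * min (F x / 2) 1 + l / 2
      rw [hmin]; linarith
    have hpos : 0 < (1 - l) * (F x / 2) := by
      apply mul_pos (by linarith); positivity
    have hlog := Real.log_le_log hpos hDge
    have hexp : Real.log ((1 - l) * (F x / 2))
        = Real.log (1 - l) + (Real.log (F x) - Real.log 2) := by
      rw [Real.log_mul (by linarith : (1:ℝ) - l ≠ 0) (by positivity),
        Real.log_div hFpos.ne' two_ne_zero]
    have hllr_eq : llr μ m x = Real.log (F x) := rfl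
    linarith
  have hνae : ∀ᵐ x ∂ν, Real.log (1 - l) + llr ν m x - Real.log 2 ≤ Real.log (1 - D x) := by
    filter_upwards [Measure.rnDeriv_pos hacν, hacν.ae_le (Measure.rnDeriv_lt_top ν m),
      hacν.ae_le hsum] with x hx hxt hxs
    have hGpos : 0 < G x := ENNReal.toReal_pos hx.ne' hxt.ne
    obtain ⟨hFG, hF2, hG2⟩ := hxs
    have hmin : min (F x / 2) 1 = F x / 2 := min_eq_left (by
      show F x / 2 ≤ 1
      have : F x + G x = 2 := hFG
      linarith)
    have h1D : (1 - l) * (G x / 2) ≤ 1 - D x := by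
      show (1 - l) * (G x / 2) ≤ 1 - ((1 - l) * min (F x / 2) 1 + l / 2)
      rw [hmin]
      have hFx : F x = 2 - G x := by have : F x + G x = 2 := hFG; linarith
      rw [hFx]
      have hid : 1 - ((1 - l) * ((2 - G x) / 2) + l / 2) = (1 - l) * (G x / 2) + l / 2 := by
        ring
      rw [hid]; linarith
    have hpos : 0 < (1 - l) * (G x / 2) := by
      apply mul_pos (by linarith); positivity
    have hlog := Real.log_le_log hpos h1D
    have hexp : Real.log ((1 - l) * (G x / 2))
        = Real.log (1 - l) + (Real.log (G x) - Real.log 2) := by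
      rw [Real.log_mul (by linarith : (1:ℝ) - l ≠ 0) (by positivity),
        Real.log_div hGpos.ne' two_ne_zero]
    have hllr_eq : llr ν m x = Real.log (G x) := rfl
    linarith
  have hLμ : Integrable (fun x => Real.log (D x)) μ := by
    refine (hintμ.abs.add (integrable_const (|Real.log (1 - l)| + Real.log 2))).mono'
      (Real.measurable_log.comp hDmeas).aestronglyMeasurable ?_
    filter_upwards [hμae] with x hx
    rw [Real.norm_eq_abs, abs_of_nonpos (Real.log_nonpos (hD01 x).1.le (hD01 x).2.le)]
    have h2 : -llr μ m x ≤ |llr μ m x| := neg_le_abs _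
    have h3 : -Real.log (1 - l) ≤ |Real.log (1 - l)| := neg_le_abs _
    simp only [Pi.add_apply, Pi.abs_apply]
    linarith
  have hLν : Integrable (fun x => Real.log (1 - D x)) ν := by
    refine (hintν.abs.add (integrable_const (|Real.log (1 - l)| + Real.log 2))).mono'
      (Real.measurable_log.comp (measurable_const.sub hDmeas)).aestronglyMeasurable ?_
    filter_upwards [hνae] with x hx
    have h01 := hD01 x
    rw [Real.norm_eq_abs, abs_of_nonpos (Real.log_nonpos (by linarith [h01.2]) (by linarith [h01.1]))]
    have h2 : -llr ν m x ≤ |llr ν m x| := neg_le_abs _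
    have h3 : -Real.log (1 - l) ≤ |Real.log (1 - l)| := neg_le_abs _
    simp only [Pi.add_apply, Pi.abs_apply]
    linarith
  have hge1 : Real.log (1 - l) + Iμ - Real.log 2 ≤ ∫ x, Real.log (D x) ∂μ := by
    have i1 : Integrable (fun x => Real.log (1 - l) + llr μ m x) μ :=
      (integrable_const _).add hintμ
    have i2 : Integrable (fun x => Real.log (1 - l) + llr μ m x - Real.log 2) μ :=
      i1.sub (integrable_const _)
    have h := integral_mono_ae i2 hLμ hμae
    rw [integral_sub i1 (integrable_const _), integral_add (integrable_const _) hintμ,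
      integral_const, integral_const] at h
    simp only [measure_univ, ENNReal.toReal_one, probReal_univ, smul_eq_mul, one_mul] at h
    linarith
  have hge2 : Real.log (1 - l) + Iν - Real.log 2 ≤ ∫ x, Real.log (1 - D x) ∂ν := by
    have i1 : Integrable (fun x => Real.log (1 - l) + llr ν m x) ν :=
      (integrable_const _).add hintν
    have i2 : Integrable (fun x => Real.log (1 - l) + llr ν m x - Real.log 2) ν :=
      i1.sub (integrable_const _)
    have h := integral_mono_ae i2 hLν hνae
    rw [integral_sub i1 (integrable_const _), integral_add (integrable_const _) hintν,
      integral_const, integral_const] at h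
    simp only [measure_univ, ENNReal.toReal_one, probReal_univ, smul_eq_mul, one_mul] at h
    linarith
  have hmem : (∫ x, Real.log (D x) ∂μ) + (∫ x, Real.log (1 - D x) ∂ν) ∈ S :=
    ⟨D, hDmeas, hD01, hLμ, hLν, rfl⟩
  have hle : Iμ + Iν - 2 * Real.log 2 - ε
      ≤ (∫ x, Real.log (D x) ∂μ) + (∫ x, Real.log (1 - D x) ∂ν) := by
    rw [hlog1l] at hge1 hge2
    linarith
  exact hle.trans (le_csSup hbdd hmem)
end
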